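/- arXiv:2005.02894 — 2 statements merged into one kernel-verified Lean document; each statement's English description precedes it below -/
import Mathlib

section
/- Assume (λ₁,λ₂) belongs to the Unstable Regime. Let u₀∈H¹(ℝ³) satisfy E(u₀)<γ(‖u₀‖²_{L²}) and G(u₀)<0, and let u∈C((−T_min,T_max);H¹(ℝ³)) be the corresponding maximal solution of the GPE. Then G(u(t))<0 for every t∈(−T_min,T_max); more precisely, there exists a constant δ>0 such that G(u(t))≤−δ for every t∈(−T_min,T_max). -/
set_option maxHeartbeats 1000000


noncomputable section

open MeasureTheory Filter Real Set
open scoped ENNReal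

abbrev E3 := EuclideanSpace ℝ (Fin 3)

/-- The dipolar kernel `K(x) = (x₁² + x₂² − 2x₃²)/|x|⁵`. -/
def dipolarK (x : E3) : ℝ := ((x 0) ^ 2 + (x 1) ^ 2 - 2 * (x 2) ^ 2) / ‖x‖ ^ 5

/-- Convolution with the dipolar kernel, taken in the principal value sense. -/
def Kconv (f : E3 → ℝ) (x : E3) : ℝ :=
  limUnder (nhdsWithin (0 : ℝ) (Set.Ioi 0))
    (fun ε : ℝ => ∫ y in {y : E3 | ε ≤ ‖x - y‖}, dipolarK (x - y) * f y)

/-- Membership in `H¹(ℝ³)`. -/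
def MemH1 (u : E3 → ℂ) : Prop :=
  MemLp u 2 (volume : Measure E3) ∧ (∀ᵐ x : E3 ∂volume, DifferentiableAt ℝ u x) ∧
    MemLp (fun x => fderiv ℝ u x) 2 (volume : Measure E3)

/-- The mass `M(u) = ∫ |u|²`. -/
def massI (u : E3 → ℂ) : ℝ := ∫ x : E3, ‖u x‖ ^ 2

/-- The kinetic energy `T(u) = ∫ |∇u|²`. -/
def kinT (u : E3 → ℂ) : ℝ := ∫ x : E3, ‖fderiv ℝ u x‖ ^ 2

/-- The potential energy `P(u) = ∫ (λ₁|u|⁴ + λ₂(K∗|u|²)|u|²)`. -/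
def potP (l1 l2 : ℝ) (u : E3 → ℂ) : ℝ :=
  ∫ x : E3, (l1 * ‖u x‖ ^ 4 + l2 * Kconv (fun y => ‖u y‖ ^ 2) x * ‖u x‖ ^ 2)

/-- The energy `E(u) = (1/2)∫ (|∇u|² + λ₁|u|⁴ + λ₂(K∗|u|²)|u|²)`. -/
def energyE (l1 l2 : ℝ) (u : E3 → ℂ) : ℝ := (1 / 2) * (kinT u + potP l1 l2 u)

/-- The functional `G(u) = T(u) + (3/2)P(u)`. -/
def funcG (l1 l2 : ℝ) (u : E3 → ℂ) : ℝ := kinT u + (3 / 2) * potP l1 l2 u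

/-- The mountain pass level `γ(c) = inf {E(u) : u ∈ H¹, ‖u‖² = c, G(u) = 0}`. -/
def gammaMP (l1 l2 c : ℝ) : ℝ :=
  sInf {e : ℝ | ∃ u : E3 → ℂ, MemH1 u ∧ massI u = c ∧ funcG l1 l2 u = 0 ∧ e = energyE l1 l2 u}

/-- The Unstable Regime. -/
def UnstableRegime (l1 l2 : ℝ) : Prop :=
  (0 < l2 → l1 - (4 * π / 3) * l2 < 0) ∧ (l2 ≤ 0 → l1 + (8 * π / 3) * l2 < 0)

/-- The time interval `(-Tmin, Tmax)`. -/
def maxInterval (Tmin Tmax : ℝ≥0∞) : Set ℝ :=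
  {t : ℝ | ENNReal.ofReal (-t) < Tmin ∧ ENNReal.ofReal t < Tmax}

/-- The Laplacian on `ℝ³`. -/
def lap3 (u : E3 → ℂ) (x : E3) : ℂ :=
  ∑ i : Fin 3, fderiv ℝ (fun y => fderiv ℝ u y (EuclideanSpace.single i 1)) x
    (EuclideanSpace.single i 1)

/-- `u` is a solution of the dipolar Gross–Pitaevskii equation
`i∂ₜu + (1/2)Δu = λ₁|u|²u + λ₂(K∗|u|²)u` on the time interval `(-Tmin, Tmax)`,
belonging to `C((-Tmin,Tmax); H¹(ℝ³))`, with conserved mass and energy. -/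
structure IsGPESolution (l1 l2 : ℝ) (Tmin Tmax : ℝ≥0∞) (u : ℝ → E3 → ℂ) : Prop where
  Tmin_pos : 0 < Tmin
  Tmax_pos : 0 < Tmax
  memH1 : ∀ t ∈ maxInterval Tmin Tmax, MemH1 (u t)
  continuousH1 : ∀ t₀ ∈ maxInterval Tmin Tmax,
    Filter.Tendsto
      (fun t : ℝ =>
        eLpNorm (fun x => u t x - u t₀ x) 2 (volume : Measure E3) +
          eLpNorm (fun x => fderiv ℝ (u t) x - fderiv ℝ (u t₀) x) 2 (volume : Measure E3))
      (nhdsWithin t₀ (maxInterval Tmin Tmax)) (nhds 0)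
  eqn : ∀ t ∈ maxInterval Tmin Tmax, ∀ x : E3,
    Complex.I * deriv (fun s : ℝ => u s x) t + (1 / 2 : ℂ) * lap3 (u t) x =
      (l1 : ℂ) * (‖u t x‖ : ℂ) ^ 2 * u t x +
        (l2 : ℂ) * (Kconv (fun y => ‖u t y‖ ^ 2) x : ℂ) * u t x
  mass_conservation : ∀ t ∈ maxInterval Tmin Tmax, massI (u t) = massI (u 0)
  energy_conservation : ∀ t ∈ maxInterval Tmin Tmax, energyE l1 l2 (u t) = energyE l1 l2 (u 0)

/-- `u` is the maximal solution of the GPE on `(-Tmin, Tmax)`: it is a solution, and any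
solution with the same initial datum has a smaller existence interval. -/
def IsMaximalGPESolution (l1 l2 : ℝ) (Tmin Tmax : ℝ≥0∞) (u : ℝ → E3 → ℂ) : Prop :=
  IsGPESolution l1 l2 Tmin Tmax u ∧
    ∀ (Tmin' Tmax' : ℝ≥0∞) (v : ℝ → E3 → ℂ),
      IsGPESolution l1 l2 Tmin' Tmax' v → v 0 = u 0 → Tmin' ≤ Tmin ∧ Tmax' ≤ Tmax

/-- `u` is cylindrically symmetric: it depends only on `|x̄|` and `x₃`. -/
def cylindricallySymmetric (u : E3 → ℂ) : Prop :=
  ∀ x y : E3, (x 0) ^ 2 + (x 1) ^ 2 = (y 0) ^ 2 + (y 1) ^ 2 → x 2 = y 2 → u x = u y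

/-- Membership in `Σ₃`: cylindrically symmetric `H¹` functions with `x₃u ∈ L²`. -/
def MemSigma3 (u : E3 → ℂ) : Prop :=
  MemH1 u ∧ cylindricallySymmetric u ∧
    MemLp (fun x : E3 => (x 2 : ℂ) * u x) 2 (volume : Measure E3)

theorem integral_sq_eq {E : Type*} [NormedAddCommGroup E] (F : E3 → E)
    (hF : AEStronglyMeasurable F (volume : Measure E3)) :
    ∫ x, ‖F x‖^2 = ((eLpNorm F 2 volume).toReal)^2 := by
  rw [MeasureTheory.integral_eq_lintegral_of_nonneg_ae
    (Filter.Eventually.of_forall fun x => sq_nonneg _) (hF.norm.pow 2)]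
  rw [MeasureTheory.eLpNorm_eq_lintegral_rpow_enorm_toReal (by norm_num) (by norm_num)]
  simp only [ENNReal.toReal_ofNat]
  rw [← ENNReal.toReal_rpow]
  rw [← Real.rpow_natCast _ 2, ← Real.rpow_mul ENNReal.toReal_nonneg]
  norm_num

theorem integrable_sq_of_memL2 {E : Type*} [NormedAddCommGroup E] {f : E3 → E}
    (hf : MemLp f 2 (volume : Measure E3)) : Integrable (fun x => ‖f x‖^2) := by
  have h := hf.integrable_norm_rpow (by norm_num) (by norm_num)
  simp only [ENNReal.toReal_ofNat] at h
  convert h using 2 with x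
  rw [← Real.rpow_natCast ‖f x‖ 2]; norm_num

def eV : E3 := EuclideanSpace.single (0 : Fin 3) (1:ℝ)
def lF : E3 →L[ℝ] ℝ := innerSL ℝ (eV)
def psiF : E3 →L[ℝ] ℂ := Complex.ofRealCLM.comp lF

theorem lF_e : lF eV = 1 := by
  simp [lF, real_inner_self_eq_norm_sq, eV, EuclideanSpace.norm_single]

theorem norm_eV : ‖eV‖ = 1 := by simp [eV, EuclideanSpace.norm_single]

theorem psiF_norm_le : ‖psiF‖ ≤ 1 := by
  apply ContinuousLinearMap.opNorm_le_bound _ zero_le_one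
  intro x
  simp only [psiF, ContinuousLinearMap.comp_apply, Complex.ofRealCLM_apply, one_mul,
    Complex.norm_real]
  calc ‖lF x‖ ≤ ‖lF‖ * ‖x‖ := lF.le_opNorm x
  _ ≤ 1 * ‖x‖ := by gcongr; rw [lF, innerSL_apply_norm, norm_eV]
  _ = ‖x‖ := one_mul _

theorem smul_psiF_norm_le (c : ℂ) : ‖c • psiF‖ ≤ ‖c‖ := by
  calc ‖c • psiF‖ = ‖c‖ * ‖psiF‖ := norm_smul c psiF
  _ ≤ ‖c‖ * 1 := by gcongr; exact psiF_norm_le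
  _ = ‖c‖ := mul_one _

theorem smul_psiF_norm_ge (c : ℂ) : ‖c‖ ≤ ‖c • psiF‖ := by
  have h := (c • psiF).le_opNorm eV
  simp only [ContinuousLinearMap.smul_apply, psiF, ContinuousLinearMap.comp_apply,
    Complex.ofRealCLM_apply, lF_e, norm_eV, mul_one, Complex.ofReal_one, smul_eq_mul,
    norm_mul, norm_one] at h
  exact h

def phF (s : ℝ) (x : E3) : ℂ := Complex.exp (Complex.I * ((s * lF x : ℝ) : ℂ))
def wFam (v : E3 → ℂ) (s : ℝ) (x : E3) : ℂ := phF s x * v x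

theorem norm_phF (s : ℝ) (x : E3) : ‖phF s x‖ = 1 := by
  rw [phF, Complex.norm_exp]; simp

theorem continuous_phF (s : ℝ) : Continuous (phF s) := by
  unfold phF; fun_prop

theorem hasFDerivAt_wFam (v : E3 → ℂ) (s : ℝ) (x : E3) (hv : DifferentiableAt ℝ v x) :
    HasFDerivAt (wFam v s)
      (phF s x • (fderiv ℝ v x + (Complex.I * s * v x) • psiF)) x := by
  have h1 : HasFDerivAt (fun x => s * lF x) (s • lF) x := (lF.hasFDerivAt).const_mul s
  have h2 := (Complex.ofRealCLM.hasFDerivAt).comp x h1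
  have h3 := h2.const_mul Complex.I
  have h4 := h3.cexp
  have h5 := h4.mul hv.hasFDerivAt
  refine h5.congr_fderiv ?_
  ext h
  simp only [phF, ContinuousLinearMap.smul_apply, ContinuousLinearMap.add_apply,
    ContinuousLinearMap.comp_apply, ContinuousLinearMap.coe_smul', Pi.smul_apply,
    Complex.ofRealCLM_apply, psiF, smul_eq_mul, Complex.ofReal_mul, Complex.real_smul,
    Function.comp]
  ring

theorem norm_wFam (v : E3 → ℂ) (s : ℝ) (x : E3) : ‖wFam v s x‖ = ‖v x‖ := by
  rw [wFam, norm_mul, norm_phF, one_mul]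

theorem gamma_bddBelow (l1 l2 c : ℝ) :
    BddBelow {e : ℝ | ∃ u : E3 → ℂ, MemH1 u ∧ massI u = c ∧ funcG l1 l2 u = 0 ∧
      e = energyE l1 l2 u} := by
  refine ⟨0, ?_⟩
  rintro e ⟨w, -, -, hGw, rfl⟩
  have hT : 0 ≤ kinT w := integral_nonneg fun x => sq_nonneg _
  have h1 : funcG l1 l2 w = kinT w + (3/2) * potP l1 l2 w := rfl
  have h2 : energyE l1 l2 w = (1/2) * (kinT w + potP l1 l2 w) := rfl
  rw [hGw] at h1
  rw [h2]; linarith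

theorem gamma_le_of_funcG_nonpos (l1 l2 : ℝ) (v : E3 → ℂ) (hv : MemH1 v)
    (hm : 0 < massI v) (hGv : funcG l1 l2 v ≤ 0) :
    gammaMP l1 l2 (massI v) ≤ - potP l1 l2 v / 4 := by
  obtain ⟨hv2, hvd, hvD⟩ := hv
  have hvm : AEStronglyMeasurable v volume := hv2.aestronglyMeasurable
  have hDm : AEStronglyMeasurable (fun x => fderiv ℝ v x) volume := hvD.aestronglyMeasurable
  set FF : ℝ → E3 → (E3 →L[ℝ] ℂ) :=
    fun s x => fderiv ℝ v x + (Complex.I * s * v x) • psiF with hFFdef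
  -- norm of the smul part
  have hBnorm : ∀ (s : ℝ) (x : E3), ‖(Complex.I * s * v x) • psiF‖ = |s| * ‖v x‖ := by
    intro s x
    have h1 : ‖(Complex.I * (s:ℂ) * v x)‖ = |s| * ‖v x‖ := by
      simp [norm_mul, Complex.norm_real, Real.norm_eq_abs]
    exact le_antisymm (by simpa [h1] using smul_psiF_norm_le (Complex.I * s * v x))
      (by simpa [h1] using smul_psiF_norm_ge (Complex.I * s * v x))
  have hFF_le : ∀ (s : ℝ) (x : E3), ‖FF s x‖ ≤ ‖fderiv ℝ v x‖ + |s| * ‖v x‖ := by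
    intro s x
    calc ‖FF s x‖ ≤ ‖fderiv ℝ v x‖ + ‖(Complex.I * s * v x) • psiF‖ := norm_add_le _ _
    _ = ‖fderiv ℝ v x‖ + |s| * ‖v x‖ := by rw [hBnorm]
  have hFF_ge : ∀ (s : ℝ) (x : E3), abs (|s| * ‖v x‖ - ‖fderiv ℝ v x‖) ≤ ‖FF s x‖ := by
    intro s x
    have := abs_norm_sub_norm_le ((Complex.I * s * v x) • psiF) (-(fderiv ℝ v x))
    simp only [norm_neg, sub_neg_eq_add, hBnorm] at this
    calc abs (|s| * ‖v x‖ - ‖fderiv ℝ v x‖) ≤ ‖(Complex.I * s * v x) • psiF + fderiv ℝ v x‖ := this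
    _ = ‖FF s x‖ := by rw [hFFdef]; rw [add_comm]
  have hFm : ∀ s : ℝ, AEStronglyMeasurable (FF s) volume := by
    intro s
    exact hDm.add ((hvm.const_mul (Complex.I * s)).smul aestronglyMeasurable_const)
  have hFmem : ∀ s : ℝ, MemLp (FF s) 2 (volume : Measure E3) := by
    intro s
    refine MemLp.add (f := fun x => fderiv ℝ v x) (g := fun x => (Complex.I * s * v x) • psiF) hvD (MemLp.of_le (hv2.norm.const_mul |s|)
      ((hvm.const_mul (Complex.I * s)).smul aestronglyMeasurable_const) ?_)
    filter_upwards with x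
    rw [hBnorm s x, Real.norm_eq_abs]
    exact le_abs_self _
  set Q : ℝ → ℝ := fun s => ∫ x : E3, ‖FF s x‖^2 with hQdef
  have hQint : ∀ s : ℝ, Integrable (fun x => ‖FF s x‖^2) :=
    fun s => integrable_sq_of_memL2 (hFmem s)
  have hQcont : Continuous Q := by
    rw [continuous_iff_continuousAt]
    intro s₀
    have hbound_mem : MemLp (fun x => ‖fderiv ℝ v x‖ + (|s₀|+1) * ‖v x‖) 2
        (volume : Measure E3) := hvD.norm.add (hv2.norm.const_mul (|s₀|+1))
    have hbound_int : Integrable (fun x => (‖fderiv ℝ v x‖ + (|s₀|+1) * ‖v x‖)^2) := by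
      have := integrable_sq_of_memL2 hbound_mem
      simpa [Real.norm_eq_abs, sq_abs] using this
    apply MeasureTheory.continuousAt_of_dominated
      (bound := fun x => (‖fderiv ℝ v x‖ + (|s₀|+1) * ‖v x‖)^2)
    · exact Eventually.of_forall fun s => (hFm s).norm.pow 2
    · have hev : ∀ᶠ s in nhds s₀, |s - s₀| < 1 := eventually_abs_sub_lt s₀ one_pos
      filter_upwards [hev] with s hs
      filter_upwards with x
      have h1 : ‖FF s x‖ ≤ ‖fderiv ℝ v x‖ + (|s₀|+1) * ‖v x‖ := by
        refine (hFF_le s x).trans ?_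
        have : |s| ≤ |s₀| + 1 := by
          have := abs_sub_abs_le_abs_sub s s₀
          linarith
        nlinarith [norm_nonneg (v x)]
      rw [Real.norm_eq_abs, abs_of_nonneg (sq_nonneg _)]
      have h0 : (0:ℝ) ≤ ‖FF s x‖ := norm_nonneg _
      nlinarith
    · exact hbound_int
    · filter_upwards with x
      have : Continuous (fun s : ℝ => ‖FF s x‖^2) := by
        apply Continuous.pow
        apply Continuous.norm
        apply Continuous.add continuous_const
        exact (((continuous_const.mul (Complex.continuous_ofReal.comp continuous_id)).mul
          continuous_const)).smul continuous_const
      exact this.continuousAt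
  -- growth
  have hMint : massI v = ∫ x : E3, ‖v x‖^2 := rfl
  set C : ℝ := ∫ x : E3, ‖v x‖ * ‖fderiv ℝ v x‖ with hCdef
  have hvsq_int : Integrable (fun x => ‖v x‖^2) := integrable_sq_of_memL2 hv2
  have hDsq_int : Integrable (fun x => ‖fderiv ℝ v x‖^2) := integrable_sq_of_memL2 hvD
  have hprod_int : Integrable (fun x => ‖v x‖ * ‖fderiv ℝ v x‖) := by
    refine Integrable.mono' (hvsq_int.add hDsq_int) (hvm.norm.mul hDm.norm) ?_
    filter_upwards with x
    simp only [Pi.add_apply]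
    rw [Real.norm_eq_abs, abs_of_nonneg (by positivity)]
    nlinarith [norm_nonneg (v x), norm_nonneg (fderiv ℝ v x), sq_nonneg (‖v x‖ - ‖fderiv ℝ v x‖)]
  have hC0 : 0 ≤ C := integral_nonneg fun x => by positivity
  have hQlow : ∀ s : ℝ, 0 ≤ s → s^2 * massI v - 2*s*C ≤ Q s := by
    intro s hs
    have hint : Integrable (fun x => s^2 * ‖v x‖^2 - 2*s*(‖v x‖ * ‖fderiv ℝ v x‖)) :=
      (hvsq_int.const_mul (s^2)).sub (hprod_int.const_mul (2*s))
    have hmono : ∀ x : E3, s^2 * ‖v x‖^2 - 2*s*(‖v x‖ * ‖fderiv ℝ v x‖) ≤ ‖FF s x‖^2 := by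
      intro x
      have h1 := hFF_ge s x
      rw [abs_of_nonneg hs] at h1
      have h2 : (s * ‖v x‖ - ‖fderiv ℝ v x‖)^2 ≤ ‖FF s x‖^2 := by
        have h3 := pow_le_pow_left₀ (abs_nonneg _) h1 2
        rwa [sq_abs] at h3
      nlinarith [sq_nonneg (‖fderiv ℝ v x‖)]
    calc s^2 * massI v - 2*s*C
        = ∫ x : E3, (s^2 * ‖v x‖^2 - 2*s*(‖v x‖ * ‖fderiv ℝ v x‖)) := by
          rw [integral_sub (hvsq_int.const_mul (s^2)) (hprod_int.const_mul (2*s)),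
            integral_const_mul, integral_const_mul, hMint]
    _ ≤ Q s := integral_mono hint (hQint s) hmono
  -- choose S
  have hT0 : 0 ≤ kinT v := integral_nonneg fun x => sq_nonneg _
  have hfuncG_eq : funcG l1 l2 v = kinT v + (3/2) * potP l1 l2 v := rfl
  have hP0 : potP l1 l2 v ≤ 0 := by
    rw [hfuncG_eq] at hGv; linarith
  set S : ℝ := max 1 ((2*C + 2 - (3/2) * potP l1 l2 v) / massI v) with hSdef
  have hS1 : (1:ℝ) ≤ S := le_max_left _ _
  have hS0 : (0:ℝ) ≤ S := by linarith
  have hSM : (2*C + 2 - (3/2) * potP l1 l2 v) ≤ S * massI v := by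
    have h := le_max_right 1 ((2*C + 2 - (3/2)*potP l1 l2 v) / massI v)
    calc (2*C + 2 - (3/2)*potP l1 l2 v)
        = ((2*C + 2 - (3/2)*potP l1 l2 v)/massI v) * massI v := by field_simp
    _ ≤ S * massI v := mul_le_mul_of_nonneg_right h hm.le
  have hNS : 0 ≤ Q S + (3/2) * potP l1 l2 v := by
    have hql := hQlow S hS0
    have k1 : S*(2*C + 2 - (3/2)*potP l1 l2 v) ≤ S*(S * massI v) :=
      mul_le_mul_of_nonneg_left hSM hS0
    have k2 : (0:ℝ) ≤ (S - 1) * (-(potP l1 l2 v)) :=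
      mul_nonneg (by linarith) (by linarith)
    nlinarith
  have hQ0 : Q 0 = kinT v := by
    have h : (fun x : E3 => ‖FF 0 x‖^2) = fun x => ‖fderiv ℝ v x‖^2 := by
      funext x
      have hz : (Complex.I * ((0:ℝ):ℂ) * v x) • psiF = 0 := by
        simp only [Complex.ofReal_zero, mul_zero, zero_mul]
        exact zero_smul ℂ psiF
      simp only [hFFdef, hz, add_zero]
    simp only [hQdef, h]
    rfl
  have hN0 : Q 0 + (3/2)*potP l1 l2 v ≤ 0 := by rw [hQ0]; exact hGv
  have hNcont : Continuous (fun s => Q s + (3/2)*potP l1 l2 v) := hQcont.add continuous_const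
  have hIVT := intermediate_value_Icc hS0 hNcont.continuousOn
  obtain ⟨s₀, hs₀mem, hs₀⟩ := hIVT ⟨hN0, hNS⟩
  -- the witness
  have hwd : ∀ᵐ x : E3 ∂(volume : Measure E3), DifferentiableAt ℝ (wFam v s₀) x :=
    hvd.mono fun x hx => (hasFDerivAt_wFam v s₀ x hx).differentiableAt
  have hwfd : (fun x => fderiv ℝ (wFam v s₀) x) =ᵐ[(volume : Measure E3)]
      (fun x => phF s₀ x • FF s₀ x) := by
    filter_upwards [hvd] with x hx
    rw [(hasFDerivAt_wFam v s₀ x hx).fderiv]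
  have hwm : AEStronglyMeasurable (wFam v s₀) volume :=
    ((continuous_phF s₀).aestronglyMeasurable).mul hvm
  have hw2 : MemLp (wFam v s₀) 2 (volume : Measure E3) :=
    MemLp.of_le hv2 hwm (Eventually.of_forall fun x => by rw [norm_wFam])
  have hsmulFF : MemLp (fun x => phF s₀ x • FF s₀ x) 2 (volume : Measure E3) := by
    refine MemLp.of_le (hFmem s₀).norm
      (((continuous_phF s₀).aestronglyMeasurable).smul (hFm s₀)) ?_
    filter_upwards with x
    have heq : ‖phF s₀ x • FF s₀ x‖ = ‖FF s₀ x‖ :=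
      (norm_smul (phF s₀ x) (FF s₀ x)).trans (by rw [norm_phF, one_mul])
    rw [heq, Real.norm_eq_abs]
    exact le_abs_self _
  have hwD : MemLp (fun x => fderiv ℝ (wFam v s₀) x) 2 (volume : Measure E3) :=
    hsmulFF.ae_eq hwfd.symm
  have hwmass : massI (wFam v s₀) = massI v := by
    simp only [massI]
    congr 1; funext x; rw [norm_wFam]
  have hwkin : kinT (wFam v s₀) = Q s₀ := by
    simp only [kinT, hQdef]
    apply integral_congr_ae
    filter_upwards [hwfd] with x hx
    have heq : ‖phF s₀ x • FF s₀ x‖ = ‖FF s₀ x‖ :=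
      (norm_smul (phF s₀ x) (FF s₀ x)).trans (by rw [norm_phF, one_mul])
    rw [hx, heq]
  have hwpot : potP l1 l2 (wFam v s₀) = potP l1 l2 v := by
    have hnorm2 : (fun y => ‖wFam v s₀ y‖^2) = fun y => ‖v y‖^2 := by
      funext y; rw [norm_wFam]
    simp only [potP, hnorm2]
    congr 1; funext x; rw [norm_wFam]
  have hwG : funcG l1 l2 (wFam v s₀) = 0 := by
    have h : funcG l1 l2 (wFam v s₀) = kinT (wFam v s₀) + (3/2)*potP l1 l2 (wFam v s₀) := rfl
    rw [h, hwkin, hwpot]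
    linarith [hs₀]
  have hwE : energyE l1 l2 (wFam v s₀) = - potP l1 l2 v / 4 := by
    have h : energyE l1 l2 (wFam v s₀) = (1/2)*(kinT (wFam v s₀) + potP l1 l2 (wFam v s₀)) := rfl
    rw [h, hwkin, hwpot]
    linarith [hs₀]
  have hmem : energyE l1 l2 (wFam v s₀) ∈ {e : ℝ | ∃ u : E3 → ℂ, MemH1 u ∧ massI u = massI v ∧
      funcG l1 l2 u = 0 ∧ e = energyE l1 l2 u} :=
    ⟨wFam v s₀, ⟨hw2, hwd, hwD⟩, hwmass, hwG, rfl⟩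
  have hfin := csInf_le (gamma_bddBelow l1 l2 (massI v)) hmem
  rw [hwE] at hfin
  exact hfin



theorem kinT_cont (I : Set ℝ) (u : ℝ → E3 → ℂ)
    (hH1 : ∀ t ∈ I, MemLp (fun x => fderiv ℝ (u t) x) 2 (volume : Measure E3))
    (hc : ∀ t₀ ∈ I, Tendsto
      (fun t : ℝ =>
        eLpNorm (fun x => u t x - u t₀ x) 2 (volume : Measure E3) +
          eLpNorm (fun x => fderiv ℝ (u t) x - fderiv ℝ (u t₀) x) 2 (volume : Measure E3))
      (nhdsWithin t₀ I) (nhds 0)) :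
    ContinuousOn (fun t => ∫ x : E3, ‖fderiv ℝ (u t) x‖^2) I := by
  intro t₀ ht₀
  set a : ℝ → ℝ := fun t => (eLpNorm (fun x => fderiv ℝ (u t) x) 2 volume).toReal with hadef
  set d : ℝ → ℝ := fun t =>
    (eLpNorm (fun x => fderiv ℝ (u t) x - fderiv ℝ (u t₀) x) 2 volume).toReal with hddef
  have hd0 : Tendsto d (nhdsWithin t₀ I) (nhds 0) := by
    have h1 : Tendsto (fun t => eLpNorm (fun x => fderiv ℝ (u t) x - fderiv ℝ (u t₀) x) 2
        (volume : Measure E3)) (nhdsWithin t₀ I) (nhds 0) := by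
      apply tendsto_of_tendsto_of_tendsto_of_le_of_le tendsto_const_nhds (hc t₀ ht₀)
      · exact fun t => zero_le
      · exact fun t => le_add_self
    have h2 := (ENNReal.tendsto_toReal (by simp : (0:ℝ≥0∞) ≠ ⊤)).comp h1
    exact h2
  have hbound : ∀ t ∈ I, |a t - a t₀| ≤ d t := by
    intro t ht
    have hFt := hH1 t ht
    have hF0 := hH1 t₀ ht₀
    have hsub : MemLp (fun x => fderiv ℝ (u t) x - fderiv ℝ (u t₀) x) 2
      (volume : Measure E3) := hFt.sub hF0
    have i1 : eLpNorm (fun x => fderiv ℝ (u t) x) 2 volume ≤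
        eLpNorm (fun x => fderiv ℝ (u t) x - fderiv ℝ (u t₀) x) 2 volume +
        eLpNorm (fun x => fderiv ℝ (u t₀) x) 2 volume := by
      have he : (fun x => fderiv ℝ (u t) x) = fun x =>
          (fderiv ℝ (u t) x - fderiv ℝ (u t₀) x) + fderiv ℝ (u t₀) x := by
        funext x; abel
      rw [he]
      exact eLpNorm_add_le (f := fun x => fderiv ℝ (u t) x - fderiv ℝ (u t₀) x) (g := fun x => fderiv ℝ (u t₀) x) hsub.aestronglyMeasurable hF0.aestronglyMeasurable one_le_two
    have i2 : eLpNorm (fun x => fderiv ℝ (u t₀) x) 2 volume ≤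
        eLpNorm (fun x => fderiv ℝ (u t) x - fderiv ℝ (u t₀) x) 2 volume +
        eLpNorm (fun x => fderiv ℝ (u t) x) 2 volume := by
      have he : (fun x => fderiv ℝ (u t₀) x) = fun x =>
          (-(fderiv ℝ (u t) x - fderiv ℝ (u t₀) x)) + fderiv ℝ (u t) x := by
        funext x; abel
      calc eLpNorm (fun x => fderiv ℝ (u t₀) x) 2 volume
          = eLpNorm (fun x => (-(fderiv ℝ (u t) x - fderiv ℝ (u t₀) x)) + fderiv ℝ (u t) x)
            2 volume := by rw [← he]
      _ ≤ eLpNorm (fun x => -(fderiv ℝ (u t) x - fderiv ℝ (u t₀) x)) 2 volume +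
            eLpNorm (fun x => fderiv ℝ (u t) x) 2 volume :=
          eLpNorm_add_le (f := fun x => -(fderiv ℝ (u t) x - fderiv ℝ (u t₀) x)) (g := fun x => fderiv ℝ (u t) x) hsub.neg.aestronglyMeasurable hFt.aestronglyMeasurable one_le_two
      _ = eLpNorm (fun x => fderiv ℝ (u t) x - fderiv ℝ (u t₀) x) 2 volume +
            eLpNorm (fun x => fderiv ℝ (u t) x) 2 volume := by
          congr 1
          exact eLpNorm_neg _ _ _
    have fin1 : eLpNorm (fun x => fderiv ℝ (u t) x) 2 volume ≠ ⊤ := hFt.eLpNorm_ne_top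
    have fin0 : eLpNorm (fun x => fderiv ℝ (u t₀) x) 2 volume ≠ ⊤ := hF0.eLpNorm_ne_top
    have fins : eLpNorm (fun x => fderiv ℝ (u t) x - fderiv ℝ (u t₀) x) 2 volume ≠ ⊤ :=
      hsub.eLpNorm_ne_top
    have j1 := ENNReal.toReal_mono (by simp [fins, fin0]) i1
    have j2 := ENNReal.toReal_mono (by simp [fins, fin1]) i2
    rw [ENNReal.toReal_add fins fin0] at j1
    rw [ENNReal.toReal_add fins fin1] at j2
    rw [abs_le]
    constructor <;> [skip; skip] <;> simp only [hadef, hddef] <;> linarith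
  have ha : Tendsto a (nhdsWithin t₀ I) (nhds (a t₀)) := by
    apply tendsto_of_tendsto_of_tendsto_of_le_of_le'
      (g := fun t => a t₀ - d t) (h := fun t => a t₀ + d t)
    · simpa using tendsto_const_nhds.sub hd0
    · simpa using tendsto_const_nhds.add hd0
    · filter_upwards [self_mem_nhdsWithin] with t ht
      have := (abs_le.mp (hbound t ht)).1
      linarith
    · filter_upwards [self_mem_nhdsWithin] with t ht
      have := (abs_le.mp (hbound t ht)).2
      linarith
  have hsq : Tendsto (fun t => (a t)^2) (nhdsWithin t₀ I) (nhds ((a t₀)^2)) := ha.pow 2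
  have heq : (fun t => (a t)^2) =ᶠ[nhdsWithin t₀ I] (fun t => ∫ x : E3, ‖fderiv ℝ (u t) x‖^2) := by
    filter_upwards [self_mem_nhdsWithin] with t ht
    exact (integral_sq_eq _ (hH1 t ht).aestronglyMeasurable).symm
  have : Tendsto (fun t => ∫ x : E3, ‖fderiv ℝ (u t) x‖^2) (nhdsWithin t₀ I)
      (nhds ((a t₀)^2)) := hsq.congr' heq
  have hval : ((a t₀)^2) = ∫ x : E3, ‖fderiv ℝ (u t₀) x‖^2 :=
    (integral_sq_eq _ (hH1 t₀ ht₀).aestronglyMeasurable).symm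
  rw [ContinuousWithinAt, ← hval]
  exact this


theorem massI_pos_of_funcG_neg (l1 l2 : ℝ) (v : E3 → ℂ) (hv : MemH1 v)
    (hG : funcG l1 l2 v < 0) : 0 < massI v := by
  rcases (integral_nonneg (f := fun x : E3 => ‖v x‖^2) (fun x : E3 => sq_nonneg (‖v x‖))).lt_or_eq with h | h
  · exact h
  · exfalso
    have hz : (fun x : E3 => ‖v x‖^2) =ᵐ[(volume : Measure E3)] 0 := by
      rw [← integral_eq_zero_iff_of_nonneg (fun x => sq_nonneg _) (integrable_sq_of_memL2 hv.1)]
      exact h.symm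
    have hpot : potP l1 l2 v = 0 := by
      have hint : (fun x : E3 => l1 * ‖v x‖^4 + l2 * Kconv (fun y => ‖v y‖^2) x * ‖v x‖^2)
          =ᵐ[(volume : Measure E3)] 0 := by
        filter_upwards [hz] with x hx
        have hx' : ‖v x‖^2 = 0 := hx
        have hnz : ‖v x‖ = 0 := by nlinarith [norm_nonneg (v x)]
        simp [Pi.zero_apply, hnz]
      calc potP l1 l2 v = ∫ _x : E3, (0:ℝ) := integral_congr_ae hint
      _ = 0 := integral_zero _ _
    have hT : 0 ≤ kinT v := integral_nonneg fun x => sq_nonneg _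
    have heq : funcG l1 l2 v = kinT v + (3/2) * potP l1 l2 v := rfl
    rw [heq, hpot] at hG
    linarith

/-- In the Unstable Regime, if `E(u₀) < γ(‖u₀‖²)` and `G(u₀) < 0`, then along the maximal
solution of the GPE one has `G(u(t)) < 0` for all `t`; more precisely there is `δ > 0` with
`G(u(t)) ≤ −δ` for every `t` in the maximal existence interval. -/
theorem gpe_G_stays_negative (l1 l2 : ℝ) (hUR : UnstableRegime l1 l2)
    (Tmin Tmax : ℝ≥0∞) (u : ℝ → E3 → ℂ)
    (hsol : IsMaximalGPESolution l1 l2 Tmin Tmax u)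
    (hE : energyE l1 l2 (u 0) < gammaMP l1 l2 (massI (u 0)))
    (hG : funcG l1 l2 (u 0) < 0) :
    (∀ t ∈ maxInterval Tmin Tmax, funcG l1 l2 (u t) < 0) ∧
      ∃ δ : ℝ, 0 < δ ∧ ∀ t ∈ maxInterval Tmin Tmax, funcG l1 l2 (u t) ≤ -δ := by
  obtain ⟨hsol1, -⟩ := hsol
  have h0I : (0:ℝ) ∈ maxInterval Tmin Tmax := by
    refine ⟨?_, ?_⟩
    · simpa using hsol1.Tmin_pos
    · simpa using hsol1.Tmax_pos
  have hmem : ∀ t ∈ maxInterval Tmin Tmax, MemH1 (u t) := hsol1.memH1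
  have hmass : ∀ t ∈ maxInterval Tmin Tmax, massI (u t) = massI (u 0) := hsol1.mass_conservation
  have hen : ∀ t ∈ maxInterval Tmin Tmax, energyE l1 l2 (u t) = energyE l1 l2 (u 0) :=
    hsol1.energy_conservation
  set E0 : ℝ := energyE l1 l2 (u 0) with hE0def
  set γ : ℝ := gammaMP l1 l2 (massI (u 0)) with hγdef
  have hm0 : 0 < massI (u 0) := massI_pos_of_funcG_neg l1 l2 (u 0) (hmem 0 h0I) hG
  have hkin : ContinuousOn (fun t => kinT (u t)) (maxInterval Tmin Tmax) :=
    kinT_cont (maxInterval Tmin Tmax) u (fun t ht => (hmem t ht).2.2) hsol1.continuousH1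
  have hpot : ∀ t ∈ maxInterval Tmin Tmax, potP l1 l2 (u t) = 2*E0 - kinT (u t) := by
    intro t ht
    have h := hen t ht
    have h1 : energyE l1 l2 (u t) = (1/2)*(kinT (u t) + potP l1 l2 (u t)) := rfl
    rw [h1] at h
    linarith
  have hfg : ∀ t ∈ maxInterval Tmin Tmax, funcG l1 l2 (u t) = 3*E0 - kinT (u t)/2 := by
    intro t ht
    have h1 : funcG l1 l2 (u t) = kinT (u t) + (3/2)*potP l1 l2 (u t) := rfl
    rw [h1, hpot t ht]
    ring
  have hfI : ContinuousOn (fun t => funcG l1 l2 (u t)) (maxInterval Tmin Tmax) := by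
    have hgI : ContinuousOn (fun t => 3*E0 - kinT (u t)/2) (maxInterval Tmin Tmax) :=
      continuousOn_const.sub (hkin.div_const 2)
    exact hgI.congr fun t ht => hfg t ht
  have part1 : ∀ t ∈ maxInterval Tmin Tmax, funcG l1 l2 (u t) < 0 := by
    intro t ht
    by_contra hcon
    push_neg at hcon
    have key : ∃ t₁ ∈ maxInterval Tmin Tmax, funcG l1 l2 (u t₁) = 0 := by
      rcases lt_trichotomy t 0 with hlt | heqt | hgt
      · have hsub : Icc t 0 ⊆ maxInterval Tmin Tmax := by
          intro s hs
          refine ⟨lt_of_le_of_lt (ENNReal.ofReal_le_ofReal (by linarith [hs.1])) ht.1, ?_⟩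
          have hz : ENNReal.ofReal s = 0 := ENNReal.ofReal_eq_zero.mpr hs.2
          rw [hz]
          exact hsol1.Tmax_pos
        have hIVT := intermediate_value_Icc' (le_of_lt hlt) (hfI.mono hsub)
        obtain ⟨t₁, ht₁, hft₁⟩ := hIVT ⟨le_of_lt hG, hcon⟩
        exact ⟨t₁, hsub ht₁, hft₁⟩
      · exfalso
        rw [heqt] at hcon
        linarith
      · have hsub : Icc 0 t ⊆ maxInterval Tmin Tmax := by
          intro s hs
          refine ⟨?_, lt_of_le_of_lt (ENNReal.ofReal_le_ofReal hs.2) ht.2⟩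
          have hz : ENNReal.ofReal (-s) = 0 := ENNReal.ofReal_eq_zero.mpr (by linarith [hs.1])
          rw [hz]
          exact hsol1.Tmin_pos
        have hIVT := intermediate_value_Icc (le_of_lt hgt) (hfI.mono hsub)
        obtain ⟨t₁, ht₁, hft₁⟩ := hIVT ⟨le_of_lt hG, hcon⟩
        exact ⟨t₁, hsub ht₁, hft₁⟩
    obtain ⟨t₁, ht₁I, hzero⟩ := key
    have hmem1 : energyE l1 l2 (u t₁) ∈ {e : ℝ | ∃ w : E3 → ℂ, MemH1 w ∧
        massI w = massI (u 0) ∧ funcG l1 l2 w = 0 ∧ e = energyE l1 l2 w} :=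
      ⟨u t₁, hmem t₁ ht₁I, hmass t₁ ht₁I, hzero, rfl⟩
    have hle := csInf_le (gamma_bddBelow l1 l2 (massI (u 0))) hmem1
    rw [hen t₁ ht₁I] at hle
    have : gammaMP l1 l2 (massI (u 0)) ≤ E0 := hle
    linarith [hE]
  refine ⟨part1, 2*(γ - E0), by simp only [hγdef, hE0def]; linarith [hE], ?_⟩
  intro t ht
  have hmt : 0 < massI (u t) := by rw [hmass t ht]; exact hm0
  have hA := gamma_le_of_funcG_nonpos l1 l2 (u t) (hmem t ht) hmt (le_of_lt (part1 t ht))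
  rw [hmass t ht] at hA
  have hp := hpot t ht
  have hf := hfg t ht
  linarith
end
end

section
/- Assume (λ₁,λ₂) belongs to the Unstable Regime. Let u₀∈H¹(ℝ³) satisfy E(u₀)<γ(‖u₀‖²_{L²}) and G(u₀)<0, and let u∈C((−T_min,T_max);H¹(ℝ³)) be the corresponding maximal solution of the GPE. Then there exists α>0 such that G(u(t)) ≤ −α‖∇u(t)‖²_{L²} for every t∈(−T_min,T_max). -/
noncomputable section

open MeasureTheory Filter Real Set
open scoped ENNReal

namespace GPEaux

/-- `∫ ‖F‖² = (‖F‖_{L²})²` for any a.e. strongly measurable `F`. -/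
lemma integral_norm_sq_eq {H : Type*} [NormedAddCommGroup H] {F : E3 → H}
    (hF : AEStronglyMeasurable F (volume : Measure E3)) :
    ∫ x : E3, ‖F x‖ ^ 2 = ((eLpNorm F 2 (volume : Measure E3)).toReal) ^ 2 := by
  have hnn : 0 ≤ᵐ[(volume : Measure E3)] fun x => ‖F x‖ ^ 2 :=
    Filter.Eventually.of_forall fun x => sq_nonneg _
  have hm : AEStronglyMeasurable (fun x => ‖F x‖ ^ 2) (volume : Measure E3) := by
    have := hF.norm
    exact (this.aemeasurable.pow_const 2).aestronglyMeasurable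
  rw [MeasureTheory.integral_eq_lintegral_of_nonneg_ae hnn hm]
  have hof : ∀ x : E3, ENNReal.ofReal (‖F x‖ ^ 2) = ‖F x‖ₑ ^ (2 : ℝ) := by
    intro x
    rw [← ofReal_norm_eq_enorm,
      ENNReal.ofReal_rpow_of_nonneg (norm_nonneg _) (by norm_num : (0:ℝ) ≤ 2)]
    congr 1
    rw [← Real.rpow_natCast ‖F x‖ 2]
    norm_num
  simp_rw [hof]
  rw [eLpNorm_eq_lintegral_rpow_enorm_toReal (by norm_num) (by norm_num)]
  have h2 : ((2 : ℝ≥0∞)).toReal = (2 : ℝ) := by norm_num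
  rw [h2]
  set L := ∫⁻ x : E3, ‖F x‖ₑ ^ (2 : ℝ) with hL
  rcases eq_or_ne L ∞ with h | h
  · rw [h]
    rw [ENNReal.top_rpow_of_pos (by norm_num)]
    simp
  · rw [← ENNReal.toReal_rpow]
    rw [← Real.rpow_natCast (L.toReal ^ (1/2 : ℝ)) 2, ← Real.rpow_mul ENNReal.toReal_nonneg]
    norm_num

lemma kinT_nonneg (w : E3 → ℂ) : 0 ≤ kinT w :=
  MeasureTheory.integral_nonneg fun x => sq_nonneg _

lemma massI_nonneg (w : E3 → ℂ) : 0 ≤ massI w :=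
  MeasureTheory.integral_nonneg fun x => sq_nonneg _

lemma kinT_eq {w : E3 → ℂ}
    (h : AEStronglyMeasurable (fun x => fderiv ℝ w x) (volume : Measure E3)) :
    kinT w = ((eLpNorm (fun x => fderiv ℝ w x) 2 (volume : Measure E3)).toReal) ^ 2 :=
  integral_norm_sq_eq h

lemma massI_eq {w : E3 → ℂ} (h : AEStronglyMeasurable w (volume : Measure E3)) :
    massI w = ((eLpNorm w 2 (volume : Measure E3)).toReal) ^ 2 :=
  integral_norm_sq_eq h

lemma massI_congr {v w : E3 → ℂ} (h : ∀ x, ‖v x‖ = ‖w x‖) : massI v = massI w := by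
  unfold massI
  congr 1
  funext x
  rw [h]

lemma potP_congr (l1 l2 : ℝ) {v w : E3 → ℂ} (h : ∀ x, ‖v x‖ = ‖w x‖) :
    potP l1 l2 v = potP l1 l2 w := by
  have hf : (fun y => ‖v y‖ ^ 2) = fun y => ‖w y‖ ^ 2 := funext fun y => by rw [h]
  unfold potP
  congr 1
  funext x
  rw [h, hf]

lemma potP_eq_zero_of_ae_zero (l1 l2 : ℝ) {w : E3 → ℂ}
    (h : w =ᵐ[(volume : Measure E3)] 0) : potP l1 l2 w = 0 := by
  unfold potP
  rw [← MeasureTheory.integral_zero E3 ℝ]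
  apply MeasureTheory.integral_congr_ae
  filter_upwards [h] with x hx
  simp [hx]

lemma massI_pos_of_funcG_neg {l1 l2 : ℝ} {w : E3 → ℂ}
    (hw : MemLp w 2 (volume : Measure E3)) (hG : funcG l1 l2 w < 0) : 0 < massI w := by
  rcases lt_or_eq_of_le (massI_nonneg w) with h | h
  · exact h
  · exfalso
    have hint : MeasureTheory.Integrable (fun x => ‖w x‖ ^ 2) (volume : Measure E3) := by
      have := hw.integrable_norm_rpow (by norm_num) (by norm_num)
      have h2 : ((2:ℝ≥0∞)).toReal = (2:ℝ) := by norm_num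
      rw [h2] at this
      convert this using 2 with x
      rw [← Real.rpow_natCast ‖w x‖ 2]
      norm_num
    have hz : (fun x => ‖w x‖ ^ 2) =ᵐ[(volume : Measure E3)] 0 := by
      have := (MeasureTheory.integral_eq_zero_iff_of_nonneg (fun x => sq_nonneg _) hint).mp h.symm
      exact this
    have hw0 : w =ᵐ[(volume : Measure E3)] 0 := by
      filter_upwards [hz] with x hx
      have : ‖w x‖ ^ 2 = 0 := hx
      have : ‖w x‖ = 0 := by nlinarith [norm_nonneg (w x)]
      simpa [norm_eq_zero] using this
    have hP : potP l1 l2 w = 0 := potP_eq_zero_of_ae_zero l1 l2 hw0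
    have : funcG l1 l2 w = kinT w := by unfold funcG; rw [hP]; ring
    have := kinT_nonneg w
    linarith [hG, this, ‹funcG l1 l2 w = kinT w›]

lemma constraint_nonneg {l1 l2 c : ℝ} :
    ∀ e ∈ {e : ℝ | ∃ u : E3 → ℂ, MemH1 u ∧ massI u = c ∧ funcG l1 l2 u = 0 ∧
      e = energyE l1 l2 u}, 0 ≤ e := by
  rintro e ⟨v, hv, hm, hGv, rfl⟩
  have hT := kinT_nonneg v
  have h1 : kinT v + (3/2) * potP l1 l2 v = 0 := hGv
  unfold energyE
  linarith

lemma gammaMP_le {l1 l2 : ℝ} {v : E3 → ℂ} (hv : MemH1 v) (hGv : funcG l1 l2 v = 0) :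
    gammaMP l1 l2 (massI v) ≤ energyE l1 l2 v := by
  apply csInf_le
  · exact ⟨0, fun e he => constraint_nonneg e he⟩
  · exact ⟨v, hv, rfl, hGv, rfl⟩

end GPEaux
namespace GPEaux

set_option maxHeartbeats 1600000

/-- The coordinate functional `x ↦ x 0` as a real-linear map to `ℂ`. -/
def ell : E3 →L[ℝ] ℂ :=
  Complex.ofRealCLM.comp (EuclideanSpace.proj (0 : Fin 3))

lemma ell_apply (x : E3) : ell x = ((x 0 : ℝ) : ℂ) := rfl

lemma abs_coord_le_norm (x : E3) : |x 0| ≤ ‖x‖ := by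
  rw [EuclideanSpace.norm_eq, ← Real.sqrt_sq_eq_abs]
  apply Real.sqrt_le_sqrt
  have := Finset.single_le_sum (f := fun i : Fin 3 => ‖x i‖ ^ 2)
    (fun i _ => sq_nonneg _) (Finset.mem_univ (0 : Fin 3))
  simpa [Real.norm_eq_abs, sq_abs] using this

lemma norm_ell_apply_le (x : E3) : ‖ell x‖ ≤ ‖x‖ := by
  rw [ell_apply, Complex.norm_real]
  exact abs_coord_le_norm x

lemma norm_ell_le : ‖ell‖ ≤ 1 :=
  ContinuousLinearMap.opNorm_le_bound _ zero_le_one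
    (fun y => by rw [one_mul]; exact norm_ell_apply_le y)

lemma ell_single : ell (EuclideanSpace.single (0 : Fin 3) (1 : ℝ)) = 1 := by
  rw [ell_apply, EuclideanSpace.single_apply]
  norm_num

lemma norm_smul_ell_le (c : ℂ) : ‖c • ell‖ ≤ ‖c‖ := by
  rw [norm_smul c ell]
  calc ‖c‖ * ‖ell‖ ≤ ‖c‖ * 1 := mul_le_mul_of_nonneg_left norm_ell_le (norm_nonneg _)
    _ = ‖c‖ := mul_one _

/-- The Galilean boost lemma: one can raise the kinetic energy to any prescribed level
`τ ≥ kinT w` by multiplying with a phase `exp(i s x₁)`, without changing `|w|`. -/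
lemma boost (l1 l2 : ℝ) (w : E3 → ℂ) (hw : MemH1 w) (hc : 0 < massI w)
    (τ : ℝ) (hτ : kinT w ≤ τ) :
    ∃ v : E3 → ℂ, MemH1 v ∧ massI v = massI w ∧ potP l1 l2 v = potP l1 l2 w ∧
      kinT v = τ := by
  classical
  set D : E3 → (E3 →L[ℝ] ℂ) := fun x => fderiv ℝ w x with hD
  have hwm : AEStronglyMeasurable w (volume : Measure E3) := hw.1.aestronglyMeasurable
  set Wf : ℝ → E3 → (E3 →L[ℝ] ℂ) :=
    fun s x => D x + (w x * ((s : ℂ) * Complex.I)) • ell with hWf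
  have hnorm_coef : ∀ (s : ℝ) (x : E3), ‖w x * ((s : ℂ) * Complex.I)‖ = |s| * ‖w x‖ := by
    intro s x
    rw [norm_mul, norm_mul, Complex.norm_I, mul_one, Complex.norm_real,
      Real.norm_eq_abs, mul_comm]
  have memB : ∀ s : ℝ, MemLp (fun x => (w x * ((s : ℂ) * Complex.I)) • ell) 2
      (volume : Measure E3) := by
    intro s
    have hsm : AEStronglyMeasurable (fun x => (w x * ((s : ℂ) * Complex.I)) • ell)
        (volume : Measure E3) := (hwm.mul_const _).smul aestronglyMeasurable_const
    refine MemLp.of_le (hw.1.const_smul s) hsm ?_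
    filter_upwards with x
    calc ‖(w x * ((s : ℂ) * Complex.I)) • ell‖ ≤ ‖w x * ((s : ℂ) * Complex.I)‖ :=
          norm_smul_ell_le _
      _ = |s| * ‖w x‖ := hnorm_coef s x
      _ = ‖s • w x‖ := by rw [norm_smul, Real.norm_eq_abs]
      _ = ‖(s • w) x‖ := rfl
  have memWf : ∀ s : ℝ, MemLp (Wf s) 2 (volume : Measure E3) := by
    intro s
    have h := hw.2.2.sub (memB s).neg
    rw [sub_neg_eq_add] at h
    have heq : ((fun x => fderiv ℝ w x) + fun x => (w x * ((s : ℂ) * Complex.I)) • ell)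
        = Wf s := rfl
    rw [heq] at h
    exact h
  have hWfm : ∀ s : ℝ, AEStronglyMeasurable (Wf s) (volume : Measure E3) :=
    fun s => (memWf s).aestronglyMeasurable
  set nF : ℝ → ℝ := fun s => (eLpNorm (Wf s) 2 (volume : Measure E3)).toReal with hnF
  set κ : ℝ → ℝ := fun s => ∫ x : E3, ‖Wf s x‖ ^ 2 with hκ
  have hκn : ∀ s, κ s = (nF s) ^ 2 := fun s => integral_norm_sq_eq (hWfm s)
  have hWf0 : Wf 0 = D := by
    funext x
    show D x + (w x * (((0:ℝ):ℂ) * Complex.I)) • ell = D x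
    rw [show (w x * (((0:ℝ):ℂ) * Complex.I)) = 0 by push_cast; ring, zero_smul ℂ ell, add_zero]
  have hκ0 : κ 0 = kinT w := by
    rw [hκ]
    simp only [hWf0]
    rfl
  set Cw : ℝ := (eLpNorm w 2 (volume : Measure E3)).toReal with hCw
  have hCw2 : massI w = Cw ^ 2 := massI_eq hwm
  have hCwpos : 0 < Cw := by
    have h1 : 0 < Cw ^ 2 := by rw [← hCw2]; exact hc
    have h0 : (0:ℝ) ≤ Cw := ENNReal.toReal_nonneg
    nlinarith
  have hwfin : eLpNorm w 2 (volume : Measure E3) ≠ ∞ := hw.1.2.ne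
  have hWffin : ∀ s, eLpNorm (Wf s) 2 (volume : Measure E3) ≠ ∞ := fun s => (memWf s).2.ne
  have hsmulE : ∀ s : ℝ, eLpNorm (s • w) 2 (volume : Measure E3)
      = (‖s‖₊ : ℝ≥0∞) * eLpNorm w 2 (volume : Measure E3) := by
    intro s
    rw [eLpNorm_const_smul]
    rfl
  -- Lipschitz estimate for nF
  have hdiff : ∀ s t : ℝ, (fun x => Wf s x - Wf t x) =
      fun x => (w x * (((s - t : ℝ) : ℂ) * Complex.I)) • ell := by
    intro s t
    funext x
    simp only [hWf]
    rw [add_sub_add_left_eq_sub,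
      ← sub_smul (w x * ((s : ℂ) * Complex.I)) (w x * ((t : ℂ) * Complex.I)) ell]
    congr 1
    push_cast
    ring
  have hlipE : ∀ s t : ℝ, eLpNorm (fun x => Wf s x - Wf t x) 2 (volume : Measure E3) ≤
      (‖s - t‖₊ : ℝ≥0∞) * eLpNorm w 2 (volume : Measure E3) := by
    intro s t
    rw [hdiff s t, ← hsmulE (s - t)]
    apply eLpNorm_mono
    intro x
    calc ‖(w x * (((s - t : ℝ) : ℂ) * Complex.I)) • ell‖
        ≤ ‖w x * (((s - t : ℝ) : ℂ) * Complex.I)‖ := norm_smul_ell_le _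
      _ = |s - t| * ‖w x‖ := hnorm_coef (s - t) x
      _ = ‖((s - t) • w) x‖ := by rw [← Real.norm_eq_abs, ← norm_smul]; rfl
  have htri : ∀ s t : ℝ, eLpNorm (Wf s) 2 (volume : Measure E3) ≤
      eLpNorm (Wf t) 2 (volume : Measure E3) +
        eLpNorm (fun x => Wf s x - Wf t x) 2 (volume : Measure E3) := by
    intro s t
    have h : Wf s = Wf t + fun x => Wf s x - Wf t x := by
      funext x
      simp
    calc eLpNorm (Wf s) 2 (volume : Measure E3)
        = eLpNorm (Wf t + fun x => Wf s x - Wf t x) 2 (volume : Measure E3) := by rw [← h]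
      _ ≤ _ := by
        have := eLpNorm_add_le (p := 2) (hWfm t) ((hWfm s).sub (hWfm t)) one_le_two
        exact this
  have hnFlip : ∀ s t : ℝ, |nF s - nF t| ≤ Cw * |s - t| := by
    intro s t
    have key : ∀ a b : ℝ, nF a ≤ nF b + |a - b| * Cw := by
      intro a b
      have h1 : eLpNorm (Wf a) 2 (volume : Measure E3) ≤
          eLpNorm (Wf b) 2 (volume : Measure E3) +
            (‖a - b‖₊ : ℝ≥0∞) * eLpNorm w 2 (volume : Measure E3) :=
        le_trans (htri a b) (add_le_add_right (hlipE a b) _)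
      have hfin : (‖a - b‖₊ : ℝ≥0∞) * eLpNorm w 2 (volume : Measure E3) ≠ ∞ :=
        ENNReal.mul_ne_top ENNReal.coe_ne_top hwfin
      have h2 := ENNReal.toReal_mono (ENNReal.add_ne_top.mpr ⟨hWffin b, hfin⟩) h1
      rw [ENNReal.toReal_add (hWffin b) hfin, ENNReal.toReal_mul, ENNReal.coe_toReal,
        coe_nnnorm, Real.norm_eq_abs] at h2
      exact h2
    have h1 := key s t
    have h2 := key t s
    rw [abs_sub_comm t s] at h2
    rw [abs_sub_le_iff]
    constructor <;> nlinarith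
  have hnFcont : Continuous nF := by
    have hl : LipschitzWith (Real.toNNReal Cw) nF := by
      apply LipschitzWith.of_dist_le_mul
      intro s t
      rw [Real.dist_eq, Real.dist_eq]
      calc |nF s - nF t| ≤ Cw * |s - t| := hnFlip s t
        _ = (Real.toNNReal Cw : ℝ) * |s - t| := by rw [Real.coe_toNNReal _ hCwpos.le]
    exact hl.continuous
  have hκcont : Continuous κ := by
    have h : κ = fun s => (nF s) ^ 2 := funext hκn
    rw [h]
    exact hnFcont.pow 2
  -- lower bound for large s
  have hlow : ∀ s : ℝ, 0 ≤ s → s * Cw ≤ nF s + nF 0 := by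
    intro s hs
    set e₀ : E3 := EuclideanSpace.single (0 : Fin 3) (1 : ℝ) with he₀
    have he₀n : ‖e₀‖ = 1 := by
      rw [he₀, EuclideanSpace.norm_single]
      norm_num
    have hpt : ∀ x : E3, ‖(s • w) x‖ ≤ ‖Wf s x‖ + ‖Wf 0 x‖ := by
      intro x
      have happ : Wf s x e₀ = D x e₀ + w x * ((s : ℂ) * Complex.I) := by
        simp only [hWf, ContinuousLinearMap.add_apply, ContinuousLinearMap.smul_apply]
        rw [ell_single]
        simp
      have h2 : ‖(s • w) x‖ = |s| * ‖w x‖ := by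
        show ‖s • w x‖ = _
        rw [norm_smul, Real.norm_eq_abs]
      rw [h2, ← hnorm_coef s x]
      have h3 : w x * ((s : ℂ) * Complex.I) = Wf s x e₀ - D x e₀ := by
        rw [happ]; ring
      rw [h3, hWf0]
      calc ‖Wf s x e₀ - D x e₀‖ ≤ ‖Wf s x e₀‖ + ‖D x e₀‖ := norm_sub_le _ _
        _ ≤ ‖Wf s x‖ * ‖e₀‖ + ‖D x‖ * ‖e₀‖ :=
            add_le_add ((Wf s x).le_opNorm e₀) ((D x).le_opNorm e₀)
        _ = ‖Wf s x‖ + ‖D x‖ := by rw [he₀n, mul_one, mul_one]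
    have hE1 : eLpNorm (s • w) 2 (volume : Measure E3) ≤
        eLpNorm (fun x => ‖Wf s x‖ + ‖Wf 0 x‖) 2 (volume : Measure E3) := by
      apply eLpNorm_mono_real
      intro x
      exact le_trans (hpt x) (le_refl _)
    have hfg : (fun x : E3 => ‖Wf s x‖ + ‖Wf 0 x‖) =
        (fun x => ‖Wf s x‖) + fun x => ‖Wf 0 x‖ := rfl
    have hE2 : eLpNorm (fun x => ‖Wf s x‖ + ‖Wf 0 x‖) 2 (volume : Measure E3) ≤
        eLpNorm (Wf s) 2 (volume : Measure E3) + eLpNorm (Wf 0) 2 (volume : Measure E3) := by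
      rw [hfg]
      calc eLpNorm ((fun x => ‖Wf s x‖) + fun x => ‖Wf 0 x‖) 2 (volume : Measure E3)
          ≤ eLpNorm (fun x => ‖Wf s x‖) 2 (volume : Measure E3) +
              eLpNorm (fun x => ‖Wf 0 x‖) 2 (volume : Measure E3) :=
            eLpNorm_add_le (hWfm s).norm (hWfm 0).norm one_le_two
        _ = _ := by rw [eLpNorm_norm, eLpNorm_norm]
    have h := le_trans hE1 hE2
    rw [hsmulE s] at h
    have hfin : eLpNorm (Wf s) 2 (volume : Measure E3) +
        eLpNorm (Wf 0) 2 (volume : Measure E3) ≠ ∞ :=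
      ENNReal.add_ne_top.mpr ⟨hWffin s, hWffin 0⟩
    have h2 := ENNReal.toReal_mono hfin h
    rw [ENNReal.toReal_add (hWffin s) (hWffin 0), ENNReal.toReal_mul, ENNReal.coe_toReal,
      coe_nnnorm, Real.norm_eq_abs, abs_of_nonneg hs] at h2
    exact h2
  -- choose the boost parameter by the intermediate value theorem
  have hτ0 : 0 ≤ τ := le_trans (kinT_nonneg w) hτ
  set S : ℝ := (nF 0 + Real.sqrt τ) / Cw with hS
  have hSnn : 0 ≤ S := div_nonneg (add_nonneg ENNReal.toReal_nonneg (Real.sqrt_nonneg _))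
    hCwpos.le
  have hκS : τ ≤ κ S := by
    have h1 : S * Cw = nF 0 + Real.sqrt τ := div_mul_cancel₀ _ hCwpos.ne'
    have h2 := hlow S hSnn
    rw [h1] at h2
    have h3 : Real.sqrt τ ≤ nF S := by linarith
    have h4 : (Real.sqrt τ) ^ 2 ≤ (nF S) ^ 2 :=
      pow_le_pow_left₀ (Real.sqrt_nonneg _) h3 2
    rw [Real.sq_sqrt hτ0] at h4
    rw [hκn S]
    exact h4
  have hmem : τ ∈ Set.Icc (κ 0) (κ S) := ⟨by rw [hκ0]; exact hτ, hκS⟩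
  have := intermediate_value_Icc hSnn hκcont.continuousOn hmem
  obtain ⟨s₀, hs₀I, hs₀⟩ := this
  -- the boosted function
  set m : E3 →L[ℝ] ℂ := ((s₀ : ℂ) * Complex.I) • ell with hm
  have hmx : ∀ x : E3, m x = ((s₀ * x 0 : ℝ) : ℂ) * Complex.I := by
    intro x
    rw [hm]
    show ((s₀ : ℂ) * Complex.I) • ell x = _
    rw [ell_apply, smul_eq_mul]
    push_cast
    ring
  set φ : E3 → ℂ := fun x => Complex.exp (m x) with hφ
  have hφnorm : ∀ x : E3, ‖φ x‖ = 1 := by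
    intro x
    rw [hφ]
    show ‖Complex.exp (m x)‖ = 1
    rw [hmx x]
    exact Complex.norm_exp_ofReal_mul_I _
  have hφcont : Continuous φ := Complex.continuous_exp.comp m.continuous
  have hφdiff : ∀ x : E3, HasFDerivAt φ (φ x • m) x :=
    fun x => (ContinuousLinearMap.hasFDerivAt m).cexp
  set v : E3 → ℂ := fun x => φ x * w x with hv
  have hvnorm : ∀ x : E3, ‖v x‖ = ‖w x‖ := by
    intro x
    rw [hv]
    show ‖φ x * w x‖ = ‖w x‖
    rw [norm_mul, hφnorm x, one_mul]
  -- derivative of v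
  have hvder : ∀ x : E3, DifferentiableAt ℝ w x →
      HasFDerivAt v (φ x • Wf s₀ x) x := by
    intro x hx
    have h := (hφdiff x).mul hx.hasFDerivAt
    have heq : φ x • fderiv ℝ w x + w x • (φ x • m) = φ x • Wf s₀ x := by
      have e1 : w x • (φ x • m) = (w x * (φ x * ((s₀ : ℂ) * Complex.I))) • ell := by
        rw [hm, smul_smul (φ x) ((s₀ : ℂ) * Complex.I) ell,
          smul_smul (w x) (φ x * ((s₀ : ℂ) * Complex.I)) ell]
      have e2 : φ x • Wf s₀ x
          = φ x • D x + (φ x * (w x * ((s₀ : ℂ) * Complex.I))) • ell := by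
        show φ x • (D x + (w x * ((s₀ : ℂ) * Complex.I)) • ell) = _
        rw [smul_add, smul_smul (φ x) (w x * ((s₀ : ℂ) * Complex.I)) ell]
      rw [e1, e2]
      have e3 : w x * (φ x * ((s₀ : ℂ) * Complex.I))
          = φ x * (w x * ((s₀ : ℂ) * Complex.I)) := by ring
      rw [e3]
    rw [heq] at h
    exact h
  have hfd_ae : ∀ᵐ x : E3 ∂(volume : Measure E3),
      fderiv ℝ v x = φ x • Wf s₀ x := by
    filter_upwards [hw.2.1] with x hx
    exact (hvder x hx).fderiv
  have hWmem := memWf s₀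
  have hφW_mem : MemLp (fun x => φ x • Wf s₀ x) 2 (volume : Measure E3) := by
    have hsm : AEStronglyMeasurable (fun x => φ x • Wf s₀ x) (volume : Measure E3) :=
      hφcont.aestronglyMeasurable.smul (hWfm s₀)
    refine MemLp.of_le hWmem hsm ?_
    filter_upwards with x
    rw [norm_smul (φ x) (Wf s₀ x), hφnorm x, one_mul]
  refine ⟨v, ⟨?_, ?_, ?_⟩, massI_congr hvnorm, potP_congr l1 l2 hvnorm, ?_⟩
  · -- MemLp v 2
    have hsm : AEStronglyMeasurable v (volume : Measure E3) :=
      hφcont.aestronglyMeasurable.mul hwm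
    refine MemLp.of_le hw.1 hsm ?_
    filter_upwards with x
    rw [hvnorm x]
  · -- a.e. differentiability
    filter_upwards [hw.2.1] with x hx
    exact (hvder x hx).differentiableAt
  · -- MemLp of the derivative
    exact hφW_mem.ae_eq (hfd_ae.mono fun x hx => hx.symm)
  · -- kinetic energy
    have : kinT v = ∫ x : E3, ‖Wf s₀ x‖ ^ 2 := by
      apply MeasureTheory.integral_congr_ae
      filter_upwards [hfd_ae] with x hx
      rw [hx, norm_smul (φ x) (Wf s₀ x), hφnorm x, one_mul]
    rw [this]
    exact hs₀

end GPEaux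
namespace GPEaux

lemma key_bound {l1 l2 : ℝ} {w : E3 → ℂ} (hw : MemH1 w) (hc : 0 < massI w)
    (hGneg : funcG l1 l2 w < 0) :
    funcG l1 l2 w ≤ 2 * (energyE l1 l2 w - gammaMP l1 l2 (massI w)) := by
  have hGdef : funcG l1 l2 w = kinT w + (3/2) * potP l1 l2 w := rfl
  have hτ : kinT w ≤ -(3/2) * potP l1 l2 w := by
    rw [hGdef] at hGneg
    linarith
  obtain ⟨v, hv, hmass, hpot, hkin⟩ := boost l1 l2 w hw hc (-(3/2) * potP l1 l2 w) hτ
  have hGv : funcG l1 l2 v = 0 := by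
    show kinT v + (3/2) * potP l1 l2 v = 0
    rw [hkin, hpot]
    ring
  have h1 : gammaMP l1 l2 (massI v) ≤ energyE l1 l2 v := gammaMP_le hv hGv
  have h2 : energyE l1 l2 v = -(potP l1 l2 w) / 4 := by
    show (1/2) * (kinT v + potP l1 l2 v) = _
    rw [hkin, hpot]
    ring
  rw [hmass, h2] at h1
  have hEdef : energyE l1 l2 w = (1/2) * (kinT w + potP l1 l2 w) := rfl
  rw [hGdef, hEdef]
  linarith

end GPEaux

namespace GPEaux

lemma arith_bound {E m T : ℝ} (hE : 0 < E) (hm : 0 < m) (hT : 6 * E + 4 * m ≤ T) :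
    3 * E - T / 2 ≤ -(2 * m / (6 * E + 4 * m)) * T := by
  have hTs : (0:ℝ) < 6 * E + 4 * m := by linarith
  have key : 2 * m * T / (6 * E + 4 * m) ≤ T / 2 - 3 * E := by
    rw [div_le_iff₀ hTs]
    nlinarith [mul_nonneg hE.le (sub_nonneg.mpr hT)]
  have h2 : -(2 * m / (6 * E + 4 * m)) * T = -(2 * m * T / (6 * E + 4 * m)) := by ring
  rw [h2]
  linarith

end GPEaux
set_option maxHeartbeats 1600000 in
/-- In the Unstable Regime, if `E(u₀) < γ(‖u₀‖²)` and `G(u₀) < 0`, then there exists `α > 0`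
such that `G(u(t)) ≤ −α‖∇u(t)‖²_{L²}` for every `t` in the maximal existence interval. -/
theorem gpe_G_controls_gradient (l1 l2 : ℝ) (hUR : UnstableRegime l1 l2)
    (Tmin Tmax : ℝ≥0∞) (u : ℝ → E3 → ℂ)
    (hsol : IsMaximalGPESolution l1 l2 Tmin Tmax u)
    (hE : energyE l1 l2 (u 0) < gammaMP l1 l2 (massI (u 0)))
    (hG : funcG l1 l2 (u 0) < 0) :
    ∃ α : ℝ, 0 < α ∧ ∀ t ∈ maxInterval Tmin Tmax, funcG l1 l2 (u t) ≤ -α * kinT (u t) := by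
  classical
  obtain ⟨hsol1, -⟩ := hsol
  have hI0 : (0:ℝ) ∈ maxInterval Tmin Tmax := by
    refine ⟨?_, ?_⟩ <;> simp [hsol1.Tmin_pos, hsol1.Tmax_pos]
  set E₀ : ℝ := energyE l1 l2 (u 0) with hE₀def
  set c : ℝ := massI (u 0) with hcdef
  set γ : ℝ := gammaMP l1 l2 c with hγdef
  have hc : 0 < c := GPEaux.massI_pos_of_funcG_neg (hsol1.memH1 0 hI0).1 hG
  -- the (continuous) kinetic energy profile
  set a : ℝ → ℝ :=
    fun t => (eLpNorm (fun x => fderiv ℝ (u t) x) 2 (volume : Measure E3)).toReal with hadef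
  have hkin : ∀ t ∈ maxInterval Tmin Tmax, kinT (u t) = a t ^ 2 :=
    fun t ht => GPEaux.kinT_eq (hsol1.memH1 t ht).2.2.aestronglyMeasurable
  have hacont : ∀ t₀ ∈ maxInterval Tmin Tmax,
      Filter.Tendsto a (nhdsWithin t₀ (maxInterval Tmin Tmax)) (nhds (a t₀)) := by
    intro t₀ ht₀
    have hsum := hsol1.continuousH1 t₀ ht₀
    set d : ℝ → ℝ≥0∞ :=
      fun t => eLpNorm (fun x => fderiv ℝ (u t) x - fderiv ℝ (u t₀) x) 2
        (volume : Measure E3) with hddef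
    have hd0 : Filter.Tendsto d (nhdsWithin t₀ (maxInterval Tmin Tmax)) (nhds 0) := by
      apply tendsto_of_tendsto_of_tendsto_of_le_of_le tendsto_const_nhds hsum
      · intro t
        exact zero_le
      · intro t
        exact le_add_self
    have hdreal : Filter.Tendsto (fun t => (d t).toReal)
        (nhdsWithin t₀ (maxInterval Tmin Tmax)) (nhds 0) := by
      have h := (ENNReal.tendsto_toReal (by norm_num : (0:ℝ≥0∞) ≠ ⊤)).comp hd0
      exact h
    have hbound : ∀ t ∈ maxInterval Tmin Tmax, |a t - a t₀| ≤ (d t).toReal := by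
      intro t ht
      have hft : MemLp (fun x => fderiv ℝ (u t) x) 2 (volume : Measure E3) :=
        (hsol1.memH1 t ht).2.2
      have hft₀ : MemLp (fun x => fderiv ℝ (u t₀) x) 2 (volume : Measure E3) :=
        (hsol1.memH1 t₀ ht₀).2.2
      have hfs : eLpNorm (fun x => fderiv ℝ (u t) x) 2 (volume : Measure E3) ≠ ⊤ :=
        hft.2.ne
      have hfs₀ : eLpNorm (fun x => fderiv ℝ (u t₀) x) 2 (volume : Measure E3) ≠ ⊤ :=
        hft₀.2.ne
      have hdfin : d t ≠ ⊤ := by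
        have h := (hft.sub hft₀).2.ne
        exact h
      have htri1 : eLpNorm (fun x => fderiv ℝ (u t) x) 2 (volume : Measure E3) ≤
          eLpNorm (fun x => fderiv ℝ (u t₀) x) 2 (volume : Measure E3) + d t := by
        have heq : (fun x => fderiv ℝ (u t) x) = (fun x => fderiv ℝ (u t₀) x) +
            fun x => fderiv ℝ (u t) x - fderiv ℝ (u t₀) x := by
          funext x
          simp
        calc eLpNorm (fun x => fderiv ℝ (u t) x) 2 (volume : Measure E3)
            = eLpNorm ((fun x => fderiv ℝ (u t₀) x) +
                fun x => fderiv ℝ (u t) x - fderiv ℝ (u t₀) x) 2 (volume : Measure E3) := by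
              rw [← heq]
          _ ≤ _ := by
              have := eLpNorm_add_le (p := 2) hft₀.aestronglyMeasurable
                (hft.aestronglyMeasurable.sub hft₀.aestronglyMeasurable) one_le_two
              exact this
      have htri2 : eLpNorm (fun x => fderiv ℝ (u t₀) x) 2 (volume : Measure E3) ≤
          eLpNorm (fun x => fderiv ℝ (u t) x) 2 (volume : Measure E3) + d t := by
        have heq : (fun x => fderiv ℝ (u t₀) x) = (fun x => fderiv ℝ (u t) x) +
            fun x => -(fderiv ℝ (u t) x - fderiv ℝ (u t₀) x) := by
          funext x
          simp
        have hneg : eLpNorm (fun x => -(fderiv ℝ (u t) x - fderiv ℝ (u t₀) x)) 2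
            (volume : Measure E3) = d t := by
          rw [hddef]
          exact eLpNorm_neg (fun x => fderiv ℝ (u t) x - fderiv ℝ (u t₀) x) 2
            (volume : Measure E3)
        calc eLpNorm (fun x => fderiv ℝ (u t₀) x) 2 (volume : Measure E3)
            = eLpNorm ((fun x => fderiv ℝ (u t) x) +
                fun x => -(fderiv ℝ (u t) x - fderiv ℝ (u t₀) x)) 2 (volume : Measure E3) := by
              rw [← heq]
          _ ≤ eLpNorm (fun x => fderiv ℝ (u t) x) 2 (volume : Measure E3) +
              eLpNorm (fun x => -(fderiv ℝ (u t) x - fderiv ℝ (u t₀) x)) 2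
                (volume : Measure E3) := by
              have := eLpNorm_add_le (p := 2) hft.aestronglyMeasurable
                ((hft.aestronglyMeasurable.sub hft₀.aestronglyMeasurable).neg) one_le_two
              exact this
          _ = _ := by rw [hneg]
      have h1 := ENNReal.toReal_mono (ENNReal.add_ne_top.mpr ⟨hfs₀, hdfin⟩) htri1
      have h2 := ENNReal.toReal_mono (ENNReal.add_ne_top.mpr ⟨hfs, hdfin⟩) htri2
      rw [ENNReal.toReal_add hfs₀ hdfin] at h1
      rw [ENNReal.toReal_add hfs hdfin] at h2
      rw [abs_sub_le_iff]
      constructor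
      · linarith
      · linarith
    apply tendsto_of_tendsto_of_tendsto_of_le_of_le'
      (g := fun t => a t₀ - (d t).toReal) (h := fun t => a t₀ + (d t).toReal)
    · simpa using tendsto_const_nhds.sub hdreal
    · simpa using tendsto_const_nhds.add hdreal
    · filter_upwards [self_mem_nhdsWithin] with t ht
      have := (abs_sub_le_iff.mp (hbound t ht)).2
      linarith
    · filter_upwards [self_mem_nhdsWithin] with t ht
      have := (abs_sub_le_iff.mp (hbound t ht)).1
      linarith
  -- the reduced functional along the flow
  set g : ℝ → ℝ := fun t => 3 * E₀ - a t ^ 2 / 2 with hgdef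
  have hgfun : ∀ t ∈ maxInterval Tmin Tmax, funcG l1 l2 (u t) = g t := by
    intro t ht
    have hE' : energyE l1 l2 (u t) = E₀ := hsol1.energy_conservation t ht
    have hk : kinT (u t) = a t ^ 2 := hkin t ht
    have hEexp : (1/2) * (kinT (u t) + potP l1 l2 (u t)) = E₀ := hE'
    have hGexp : funcG l1 l2 (u t) = kinT (u t) + (3/2) * potP l1 l2 (u t) := rfl
    rw [hgdef]
    rw [hGexp]
    linarith
  have hnz : ∀ t ∈ maxInterval Tmin Tmax, funcG l1 l2 (u t) ≠ 0 := by
    intro t ht h0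
    have h1 : gammaMP l1 l2 (massI (u t)) ≤ energyE l1 l2 (u t) :=
      GPEaux.gammaMP_le (hsol1.memH1 t ht) h0
    rw [hsol1.mass_conservation t ht, hsol1.energy_conservation t ht] at h1
    exact absurd hE (not_lt.mpr h1)
  have hOC : (maxInterval Tmin Tmax).OrdConnected := by
    constructor
    intro x hx y hy z hz
    exact ⟨lt_of_le_of_lt (ENNReal.ofReal_le_ofReal (neg_le_neg hz.1)) hx.1,
      lt_of_le_of_lt (ENNReal.ofReal_le_ofReal hz.2) hy.2⟩
  have hpre : IsPreconnected (maxInterval Tmin Tmax) := hOC.isPreconnected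
  have hgc : ContinuousOn g (maxInterval Tmin Tmax) := by
    intro t₀ ht₀
    have h := ((hacont t₀ ht₀).pow 2).div_const 2
    exact (tendsto_const_nhds.sub h)
  have hneg : ∀ t ∈ maxInterval Tmin Tmax, funcG l1 l2 (u t) < 0 := by
    intro t ht
    rcases lt_trichotomy (funcG l1 l2 (u t)) 0 with h | h | h
    · exact h
    · exact absurd h (hnz t ht)
    · exfalso
      have himg : IsPreconnected (g '' maxInterval Tmin Tmax) := hpre.image g hgc
      have hg0 : g 0 < 0 := by rw [← hgfun 0 hI0]; exact hG
      have hgt : 0 < g t := by rw [← hgfun t ht]; exact h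
      have h0mem : (0:ℝ) ∈ g '' maxInterval Tmin Tmax := by
        have hsub := himg.ordConnected.out (Set.mem_image_of_mem g hI0)
          (Set.mem_image_of_mem g ht)
        exact hsub ⟨hg0.le, hgt.le⟩
      obtain ⟨s, hs, hgs⟩ := h0mem
      exact hnz s hs (by rw [hgfun s hs]; exact hgs)
  have hkey : ∀ t ∈ maxInterval Tmin Tmax, funcG l1 l2 (u t) ≤ 2 * (E₀ - γ) := by
    intro t ht
    have h := GPEaux.key_bound (hsol1.memH1 t ht)
      (by rw [hsol1.mass_conservation t ht]; exact hc) (hneg t ht)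
    rw [hsol1.mass_conservation t ht, hsol1.energy_conservation t ht] at h
    exact h
  have hfid : ∀ t ∈ maxInterval Tmin Tmax,
      funcG l1 l2 (u t) = 3 * E₀ - kinT (u t) / 2 := by
    intro t ht
    have hb : g t = 3 * E₀ - a t ^ 2 / 2 := rfl
    rw [hgfun t ht, hb, hkin t ht]
  rcases le_or_gt E₀ 0 with hE0 | hE0
  · refine ⟨1/2, by norm_num, ?_⟩
    intro t ht
    have h2 := hfid t ht
    have : -(1/2 : ℝ) * kinT (u t) = -(kinT (u t)) / 2 := by ring
    rw [this]
    linarith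
  · have hm : 0 < γ - E₀ := sub_pos.mpr hE
    have hTs : 0 < 6 * E₀ + 4 * (γ - E₀) := by linarith
    refine ⟨2 * (γ - E₀) / (6 * E₀ + 4 * (γ - E₀)), div_pos (by linarith) hTs, ?_⟩
    intro t ht
    have h1 : funcG l1 l2 (u t) ≤ -(2 * (γ - E₀)) := by
      have := hkey t ht
      linarith
    have h2 := hfid t ht
    have hT : 6 * E₀ + 4 * (γ - E₀) ≤ kinT (u t) := by linarith
    rw [h2]
    exact GPEaux.arith_bound hE0 hm hT
end
end
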